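/- Let V be a finite set and f : 2^V → ℝ a monotone submodular function with f(∅) = 0. Let X ⊆ V be nonempty with Σ_{j∈X} f({j}) > 0, and define the average curvature κ̂_f(X) = 1 − (Σ_{j∈X} f(j | X∖{j}))/(Σ_{j∈X} f({j})) and α_f(X) = |X| / (1 + (|X|−1)·(1 − κ̂_f(X))). Then Σ_{j∈X} f({j}) ≤ α_f(X) · f(X). -/
import Mathlib

lemma aux_telescope {V : Type*} [DecidableEq V]
    (f : Finset V → ℝ)
    (hsub : ∀ S T : Finset V, f S + f T ≥ f (S ∪ T) + f (S ∩ T)) :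
    ∀ B A X : Finset V, A ∪ B = X → Disjoint A B →
      (∑ i ∈ B, (f X - f (X.erase i))) ≤ f X - f A := by
  intro B
  induction B using Finset.induction_on with
  | empty =>
    intro A X h hd
    simp only [Finset.union_empty] at h
    simp [h]
  | @insert i B' hi ih =>
    intro A X h hd
    have hiA : i ∉ A := fun hmem => (Finset.disjoint_left.mp hd hmem) (Finset.mem_insert_self i B')
    have hAB' : Disjoint (insert i A) B' :=
      Finset.disjoint_insert_left.mpr ⟨hi, (Finset.disjoint_insert_right.mp hd).2⟩
    have hunion : insert i A ∪ B' = X := by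
      rw [← h]
      rw [Finset.insert_union, ← Finset.union_insert]
    have hiX : i ∈ X := by rw [← h]; exact Finset.mem_union_right _ (Finset.mem_insert_self i B')
    have hAX : A ⊆ X := by rw [← h]; exact Finset.subset_union_left
    have key := hsub (insert i A) (X.erase i)
    have h1 : insert i A ∪ X.erase i = X := by
      have : A ⊆ X.erase i := Finset.subset_erase.mpr ⟨hAX, hiA⟩
      rw [Finset.insert_union]
      rw [Finset.union_eq_right.mpr this]
      exact Finset.insert_erase hiX
    have h2 : insert i A ∩ X.erase i = A := by
      ext x
      simp only [Finset.mem_inter, Finset.mem_insert, Finset.mem_erase]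
      constructor
      · rintro ⟨hx1 | hx1, hx2, _⟩
        · exact absurd hx1 hx2.elim
        · exact hx1
      · intro hx
        exact ⟨Or.inr hx, fun he => hiA (he ▸ hx), hAX hx⟩
    rw [h1, h2] at key
    have ihh := ih (insert i A) X hunion hAB'
    rw [Finset.sum_insert hi]
    linarith

/-- For a monotone submodular `f` with `f(∅) = 0` and nonempty `X`
with `Σ_{j∈X} f({j}) > 0`, with average curvature
`κ̂_f(X) = 1 − (Σ_{j∈X} f(j | X∖{j}))/(Σ_{j∈X} f({j}))` and
`α_f(X) = |X| / (1 + (|X|−1)·(1 − κ̂_f(X)))`, we have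
`Σ_{j∈X} f({j}) ≤ α_f(X) · f(X)`. -/
theorem singleton_sum_le_curvature_factor_mul
    {V : Type*} [Fintype V] [DecidableEq V]
    (f : Finset V → ℝ)
    (hsub : ∀ S T : Finset V, f S + f T ≥ f (S ∪ T) + f (S ∩ T))
    (hmono : ∀ S T : Finset V, S ⊆ T → f S ≤ f T)
    (h0 : f ∅ = 0)
    (X : Finset V) (hX : X.Nonempty)
    (hpos : 0 < ∑ j ∈ X, f {j}) :
    (∑ j ∈ X, f {j}) ≤
      ((X.card : ℝ) /
        (1 + ((X.card : ℝ) - 1) *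
          (1 - (1 - (∑ j ∈ X, (f X - f (X.erase j))) / (∑ j ∈ X, f {j}))))) * f X := by
  set s := ∑ j ∈ X, f {j} with hs
  set m := ∑ j ∈ X, (f X - f (X.erase j)) with hm
  set n := (X.card : ℝ) with hn
  have hsne : s ≠ 0 := ne_of_gt hpos
  have hn1 : 1 ≤ n := by
    have h1 : 1 ≤ X.card := Finset.card_pos.mpr hX
    rw [hn]
    exact_mod_cast h1
  have hm0 : 0 ≤ m := by
    apply Finset.sum_nonneg
    intro j hj
    have := hmono (X.erase j) X (Finset.erase_subset j X)
    linarith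
  -- per element inequality
  have hper : ∀ j ∈ X, m - (f X - f (X.erase j)) ≤ f X - f {j} := by
    intro j hj
    have haux := aux_telescope f hsub (X.erase j) {j} X
      (by rw [← Finset.insert_eq]; exact Finset.insert_erase hj)
      (by simp)
    have hsplit : m = (f X - f (X.erase j)) + ∑ i ∈ X.erase j, (f X - f (X.erase i)) := by
      rw [hm, ← Finset.add_sum_erase X _ hj]
    linarith
  have hkey : s + (n - 1) * m ≤ n * f X := by
    have hsum := Finset.sum_le_sum hper
    have e1 : ∑ j ∈ X, (m - (f X - f (X.erase j))) = n * m - m := by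
      rw [Finset.sum_sub_distrib, ← hm, Finset.sum_const, nsmul_eq_mul, ← hn]
    have e2 : ∑ j ∈ X, (f X - f {j}) = n * f X - s := by
      rw [Finset.sum_sub_distrib, ← hs, Finset.sum_const, nsmul_eq_mul, ← hn]
    rw [e1, e2] at hsum
    linarith
  -- simplify the expression
  have hsimp : 1 - (1 - m / s) = m / s := by ring
  rw [hsimp]
  have hDpos : 0 < 1 + (n - 1) * (m / s) := by
    have : 0 ≤ (n - 1) * (m / s) :=
      mul_nonneg (by linarith) (div_nonneg hm0 (le_of_lt hpos))
    linarith
  rw [div_mul_eq_mul_div, le_div_iff₀ hDpos]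
  have hexpand : s * (1 + (n - 1) * (m / s)) = s + (n - 1) * m := by
    field_simp
  rw [hexpand]
  linarith
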